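/- Let Ω be a discrete topological space with card(Ω) = 𝔠, let N(Ω) = Ω^ℕ be the countable power of Ω equipped with the product topology, and let k ∈ ℕ. Then there exists a metric ρ on N(Ω) inducing the product topology such that: (1) ρ is complete; (2) the diameter of N(Ω) with respect to ρ is at most 2^{−k}; and (3) ρ is strongly rigid. -/

import Mathlib

namespace Stmt7

open Classical

noncomputable section

variable {Ω : Type}

def trunc (w : Ω) (i : ℕ) (x : ℕ → Ω) : ℕ → Ω := fun m => if m < i then x m else w

def q (n : ℕ) : ℝ := (4 : ℝ)⁻¹ ^ n

def pos (i m : ℕ) : ℕ := 2 ^ i * (2 * m + 1)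

lemma q_pos (n : ℕ) : 0 < q n := pow_pos (by norm_num) n

lemma q_nonneg (n : ℕ) : 0 ≤ q n := (q_pos n).le

lemma q_antitone {a b : ℕ} (h : a ≤ b) : q b ≤ q a :=
  pow_le_pow_of_le_one (by norm_num) (by norm_num) h

lemma q_add (a b : ℕ) : q (a + b) = q a * q b := pow_add _ _ _

lemma summable_q : Summable q := summable_geometric_of_lt_one (by norm_num) (by norm_num)

lemma tsum_q : ∑' n, q n = 4 / 3 := by
  simp only [q]
  rw [tsum_geometric_of_lt_one (by norm_num) (by norm_num)]; norm_num

lemma pos_zero (i : ℕ) : pos i 0 = 2 ^ i := by simp [pos]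

lemma pos_succ (i m : ℕ) : pos i (m + 1) = 3 * 2 ^ i + 2 ^ (i + 1) * m := by
  simp only [pos, pow_succ]; ring

lemma pos_inj : ∀ i i' m m', pos i m = pos i' m' → i = i' ∧ m = m' := by
  intro i
  induction i with
  | zero =>
    intro i' m m' h
    cases i' with
    | zero => simp [pos] at h; omega
    | succ s =>
      exfalso
      have h' : 2 * m + 1 = 2 * (2 ^ s * (2 * m' + 1)) := by
        calc 2 * m + 1 = 2 ^ 0 * (2 * m + 1) := by ring
        _ = 2 ^ (s + 1) * (2 * m' + 1) := h
        _ = 2 * (2 ^ s * (2 * m' + 1)) := by ring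
      omega
  | succ s ih =>
    intro i' m m' h
    cases i' with
    | zero =>
      exfalso
      have h' : 2 * m' + 1 = 2 * (2 ^ s * (2 * m + 1)) := by
        calc 2 * m' + 1 = 2 ^ 0 * (2 * m' + 1) := by ring
        _ = 2 ^ (s + 1) * (2 * m + 1) := h.symm
        _ = 2 * (2 ^ s * (2 * m + 1)) := by ring
      omega
    | succ s' =>
      have h' : 2 ^ s * (2 * m + 1) = 2 ^ s' * (2 * m' + 1) := by
        have h2 : 2 * (2 ^ s * (2 * m + 1)) = 2 * (2 ^ s' * (2 * m' + 1)) := by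
          calc 2 * (2 ^ s * (2 * m + 1)) = 2 ^ (s + 1) * (2 * m + 1) := by ring
          _ = 2 ^ (s' + 1) * (2 * m' + 1) := h
          _ = 2 * (2 ^ s' * (2 * m' + 1)) := by ring
        exact Nat.eq_of_mul_eq_mul_left (by norm_num) h2
      have := ih s' m m' h'
      omega

lemma pos_injective : Function.Injective (fun z : ℕ × ℕ => pos z.1 z.2) := by
  rintro ⟨i, m⟩ ⟨i', m'⟩ h
  obtain ⟨h1, h2⟩ := pos_inj i i' m m' h
  simp [h1, h2]

lemma m_le_pos (i m : ℕ) : m ≤ pos i m :=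
  calc m ≤ 2 * m + 1 := by omega
  _ ≤ 2 ^ i * (2 * m + 1) := Nat.le_mul_of_pos_left _ (Nat.pow_pos (by norm_num))

variable (w : Ω) (J : Sym2 (ℕ → Ω) → ℕ → Bool)

def bit (x y : ℕ → Ω) (i m : ℕ) : Bool :=
  if i = 0 then false
  else if trunc w i x = trunc w i y then false
  else match m with
    | 0 => true
    | m + 1 => J s(trunc w i x, trunc w i y) m

def val (x y : ℕ → Ω) (i m : ℕ) : ℝ := if bit w J x y i m then q (pos i m) else 0

def θ (x y : ℕ → Ω) (i : ℕ) : ℝ := ∑' m, val w J x y i m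

def ρ₀ (x y : ℕ → Ω) : ℝ := ∑' i, θ w J x y i

variable {w J}

lemma bit_symm (x y : ℕ → Ω) (i m : ℕ) : bit w J x y i m = bit w J y x i m := by
  unfold bit
  rcases eq_or_ne (trunc w i x) (trunc w i y) with h | h
  · rw [h]
  · rw [if_neg h, if_neg (Ne.symm h), Sym2.eq_swap]

lemma bit_congr_left {x y : ℕ → Ω} {i : ℕ} (h : trunc w i x = trunc w i y) (z : ℕ → Ω) (m : ℕ) :
    bit w J x z i m = bit w J y z i m := by
  unfold bit; rw [h]

lemma bit_eq_false_of_diag {x y : ℕ → Ω} {i : ℕ} (h : trunc w i x = trunc w i y) (m : ℕ) :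
    bit w J x y i m = false := by
  unfold bit; rw [h]; simp

lemma bit_zero (x y : ℕ → Ω) (m : ℕ) : bit w J x y 0 m = false := by
  unfold bit; simp

lemma bit_lead {x y : ℕ → Ω} {i : ℕ} (h0 : i ≠ 0) (h : trunc w i x ≠ trunc w i y) :
    bit w J x y i 0 = true := by
  unfold bit; rw [if_neg h0, if_neg h]

lemma bit_tail {x y : ℕ → Ω} {i : ℕ} (h0 : i ≠ 0) (h : trunc w i x ≠ trunc w i y) (m : ℕ) :
    bit w J x y i (m + 1) = J s(trunc w i x, trunc w i y) m := by
  unfold bit; rw [if_neg h0, if_neg h]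

lemma val_nonneg (x y : ℕ → Ω) (i m : ℕ) : 0 ≤ val w J x y i m := by
  unfold val; split
  · exact q_nonneg _
  · exact le_refl 0

lemma val_le (x y : ℕ → Ω) (i m : ℕ) : val w J x y i m ≤ q (pos i m) := by
  unfold val; split
  · exact le_refl _
  · exact q_nonneg _

lemma val_symm (x y : ℕ → Ω) (i m : ℕ) : val w J x y i m = val w J y x i m := by
  unfold val; rw [bit_symm]

lemma summable_val (x y : ℕ → Ω) (i : ℕ) : Summable (fun m => val w J x y i m) :=
  Summable.of_nonneg_of_le (val_nonneg x y i)
    (fun m => (val_le x y i m).trans (q_antitone (m_le_pos i m))) summable_q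

lemma summable_val_prod (x y : ℕ → Ω) :
    Summable (fun z : ℕ × ℕ => val w J x y z.1 z.2) := by
  refine Summable.of_nonneg_of_le (fun z => val_nonneg x y z.1 z.2)
    (fun z => val_le x y z.1 z.2) ?_
  exact summable_q.comp_injective pos_injective

lemma θ_nonneg (x y : ℕ → Ω) (i : ℕ) : 0 ≤ θ w J x y i :=
  tsum_nonneg (val_nonneg x y i)

lemma θ_symm (x y : ℕ → Ω) (i : ℕ) : θ w J x y i = θ w J y x i := by
  unfold θ; exact tsum_congr (val_symm x y i)

lemma θ_congr_left {x y : ℕ → Ω} {i : ℕ} (h : trunc w i x = trunc w i y) (z : ℕ → Ω) :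
    θ w J x z i = θ w J y z i := by
  unfold θ; exact tsum_congr (fun m => by unfold val; rw [bit_congr_left h])

lemma θ_diag {x y : ℕ → Ω} {i : ℕ} (h : trunc w i x = trunc w i y) : θ w J x y i = 0 := by
  unfold θ
  have : (fun m => val w J x y i m) = fun _ => 0 := by
    funext m; unfold val; rw [bit_eq_false_of_diag h]; simp
  rw [this, tsum_zero]

lemma θ_zero (x y : ℕ → Ω) : θ w J x y 0 = 0 := by
  unfold θ
  have : (fun m => val w J x y 0 m) = fun _ => 0 := by
    funext m; unfold val; rw [bit_zero]; simp
  rw [this, tsum_zero]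

lemma θ_le (x y : ℕ → Ω) (i : ℕ) : θ w J x y i ≤ 2 * q (2 ^ i) := by
  unfold θ
  rw [Summable.tsum_eq_zero_add (summable_val x y i)]
  have h0 : val w J x y i 0 ≤ q (2 ^ i) := by
    rw [← pos_zero i]; exact val_le x y i 0
  have htail : ∑' m, val w J x y i (m + 1) ≤ q (2 ^ i) := by
    have hsum : Summable (fun m => val w J x y i (m + 1)) :=
      (summable_val x y i).comp_injective (add_left_injective 1)
    have hle : ∀ m, val w J x y i (m + 1) ≤ q (3 * 2 ^ i) * q m := by
      intro m
      calc val w J x y i (m + 1) ≤ q (pos i (m + 1)) := val_le x y i (m + 1)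
      _ = q (3 * 2 ^ i + 2 ^ (i + 1) * m) := by rw [pos_succ]
      _ = q (3 * 2 ^ i) * q (2 ^ (i + 1) * m) := q_add _ _
      _ ≤ q (3 * 2 ^ i) * q m :=
          mul_le_mul_of_nonneg_left
            (q_antitone (Nat.le_mul_of_pos_left _ (Nat.pow_pos (by norm_num)))) (q_nonneg _)
    calc ∑' m, val w J x y i (m + 1) ≤ ∑' m, q (3 * 2 ^ i) * q m :=
          Summable.tsum_le_tsum hle hsum (summable_q.mul_left _)
    _ = q (3 * 2 ^ i) * (4 / 3) := by rw [tsum_mul_left, tsum_q]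
    _ ≤ q (2 ^ i) := by
        have h3 : (3 : ℕ) * 2 ^ i = 2 ^ i + 2 ^ i * 2 := by ring
        rw [h3, q_add]
        have h4 : q (2 ^ i * 2) ≤ q 2 :=
          q_antitone (Nat.le_mul_of_pos_left _ (Nat.pow_pos (by norm_num)))
        have hq2 : q 2 = 1 / 16 := by norm_num [q]
        nlinarith [q_pos (2 ^ i), q_nonneg (2 ^ i * 2)]
  linarith

lemma θ_ge {x y : ℕ → Ω} {i : ℕ} (h0 : i ≠ 0) (h : trunc w i x ≠ trunc w i y) :
    q (2 ^ i) ≤ θ w J x y i := by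
  have hb : val w J x y i 0 = q (2 ^ i) := by
    unfold val
    rw [bit_lead h0 h, if_pos rfl, pos_zero]
  calc q (2 ^ i) = val w J x y i 0 := hb.symm
  _ ≤ θ w J x y i := Summable.le_tsum (summable_val x y i) 0 (fun j _ => val_nonneg x y i j)

lemma θ_triangle (x y z : ℕ → Ω) (i : ℕ) :
    θ w J x z i ≤ θ w J x y i + θ w J y z i := by
  rcases eq_or_ne i 0 with h0 | h0
  · subst h0; rw [θ_zero, θ_zero, θ_zero]; norm_num
  by_cases hxy : trunc w i x = trunc w i y
  · rw [θ_congr_left hxy z, θ_diag hxy]; linarith [@θ_nonneg Ω w J y z i]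
  by_cases hyz : trunc w i y = trunc w i z
  · have h1 : θ w J x z i = θ w J x y i := by
      rw [θ_symm x z, θ_congr_left hyz.symm x, θ_symm y x]
    rw [h1, θ_diag hyz]; norm_num
  · calc θ w J x z i ≤ 2 * q (2 ^ i) := θ_le x z i
    _ = q (2 ^ i) + q (2 ^ i) := by ring
    _ ≤ θ w J x y i + θ w J y z i := add_le_add (θ_ge h0 hxy) (θ_ge h0 hyz)

lemma summable_θ (x y : ℕ → Ω) : Summable (θ w J x y) := by
  refine Summable.of_nonneg_of_le (θ_nonneg x y) (fun i => ?_) (summable_q.mul_left 2)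
  calc θ w J x y i ≤ 2 * q (2 ^ i) := θ_le x y i
  _ ≤ 2 * q i := by
      have := q_antitone (Nat.le_of_lt (Nat.lt_two_pow_self (n := i)))
      linarith

lemma ρ₀_nonneg (x y : ℕ → Ω) : 0 ≤ ρ₀ w J x y := tsum_nonneg (θ_nonneg x y)

lemma ρ₀_symm (x y : ℕ → Ω) : ρ₀ w J x y = ρ₀ w J y x := tsum_congr (θ_symm x y)

lemma ρ₀_self (x : ℕ → Ω) : ρ₀ w J x x = 0 := by
  unfold ρ₀
  have : (fun i => θ w J x x i) = fun _ => 0 := funext fun i => θ_diag rfl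
  rw [this, tsum_zero]

lemma ρ₀_triangle (x y z : ℕ → Ω) : ρ₀ w J x z ≤ ρ₀ w J x y + ρ₀ w J y z := by
  unfold ρ₀
  rw [← Summable.tsum_add (summable_θ x y) (summable_θ y z)]
  exact Summable.tsum_le_tsum (θ_triangle x y z) (summable_θ x z)
    ((summable_θ x y).add (summable_θ y z))

lemma trunc_ne_of_ne {x y : ℕ → Ω} {nn i : ℕ} (h : x nn ≠ y nn) (hi : nn < i) :
    trunc w i x ≠ trunc w i y := by
  intro he
  apply h
  have := congrFun he nn
  simpa [trunc, hi] using this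

lemma θ_le_ρ₀ (x y : ℕ → Ω) (i : ℕ) : θ w J x y i ≤ ρ₀ w J x y :=
  Summable.le_tsum (summable_θ x y) i (fun j _ => θ_nonneg x y j)

lemma ρ₀_ge {x y : ℕ → Ω} {nn : ℕ} (h : x nn ≠ y nn) :
    q (2 ^ (nn + 1)) ≤ ρ₀ w J x y :=
  le_trans (θ_ge (Nat.succ_ne_zero nn) (trunc_ne_of_ne h (Nat.lt_succ_self nn)))
    (θ_le_ρ₀ x y (nn + 1))

lemma ρ₀_le_one (x y : ℕ → Ω) : ρ₀ w J x y ≤ 1 := by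
  have hpt : ∀ i, θ w J x y i ≤ (1 / 2) * q i := by
    intro i
    have h1 : θ w J x y i ≤ 2 * q (2 ^ i) := θ_le x y i
    have h2 : q (2 ^ i) ≤ q (i + 1) := q_antitone (Nat.lt_two_pow_self (n := i))
    have h3 : q (i + 1) = q i * 4⁻¹ := by rw [q_add]; norm_num [q]
    nlinarith [q_nonneg i]
  calc ρ₀ w J x y ≤ ∑' i, (1 / 2) * q i :=
        Summable.tsum_le_tsum hpt (summable_θ x y) (summable_q.mul_left _)
  _ = (1 / 2) * (4 / 3) := by rw [tsum_mul_left, tsum_q]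
  _ ≤ 1 := by norm_num

lemma trunc_eq_of_agree {x y : ℕ → Ω} {N i : ℕ} (h : ∀ m < N, x m = y m) (hi : i ≤ N) :
    trunc w i x = trunc w i y := by
  funext m
  unfold trunc
  split
  · exact h m (lt_of_lt_of_le (by assumption) hi)
  · rfl

lemma ρ₀_le_of_agree {x y : ℕ → Ω} {N : ℕ} (h : ∀ m < N, x m = y m) :
    ρ₀ w J x y ≤ q N := by
  unfold ρ₀
  rw [← Summable.sum_add_tsum_nat_add (N + 1) (summable_θ x y)]
  have hsum0 : ∑ i ∈ Finset.range (N + 1), θ w J x y i = 0 := by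
    apply Finset.sum_eq_zero
    intro i hi
    exact θ_diag (trunc_eq_of_agree h (Nat.lt_succ_iff.1 (Finset.mem_range.1 hi)))
  rw [hsum0, zero_add]
  have hpt : ∀ i, θ w J x y (i + (N + 1)) ≤ (2 * q (N + 2)) * q i := by
    intro i
    have h1 : θ w J x y (i + (N + 1)) ≤ 2 * q (2 ^ (i + (N + 1))) := θ_le x y _
    have h2 : q (2 ^ (i + (N + 1))) ≤ q (i + (N + 1) + 1) := q_antitone Nat.lt_two_pow_self
    have h3 : q (i + (N + 1) + 1) = q (N + 2) * q i := by
      rw [show i + (N + 1) + 1 = (N + 2) + i by ring, q_add]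
    nlinarith [q_nonneg i, q_nonneg (N + 2)]
  calc ∑' i, θ w J x y (i + (N + 1)) ≤ ∑' i, (2 * q (N + 2)) * q i :=
        Summable.tsum_le_tsum hpt ((summable_θ x y).comp_injective (add_left_injective (N + 1)))
          (summable_q.mul_left _)
  _ = (2 * q (N + 2)) * (4 / 3) := by rw [tsum_mul_left, tsum_q]
  _ ≤ q N := by
      have h4 : q (N + 2) = q N * q 2 := q_add N 2
      have hq2 : q 2 = 1 / 16 := by norm_num [q]
      nlinarith [q_pos N]


section Rigid

variable (w J)

def G (x y : ℕ → Ω) (n : ℕ) : ℝ :=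
  if ∃ z : ℕ × ℕ, pos z.1 z.2 = n ∧ bit w J x y z.1 z.2 = true then q n else 0

variable {w J}

lemma G_pos_eq (x y : ℕ → Ω) (i m : ℕ) :
    G w J x y (pos i m) = val w J x y i m := by
  unfold G val
  refine if_congr ?_ rfl rfl
  constructor
  · rintro ⟨z, hz, hb⟩
    have : z = (i, m) := pos_injective hz
    rw [this] at hb
    exact hb
  · intro hb
    exact ⟨(i, m), rfl, hb⟩

lemma ρ₀_eq_tsum_G (x y : ℕ → Ω) : ρ₀ w J x y = ∑' n, G w J x y n := by
  have h1 : ρ₀ w J x y = ∑' z : ℕ × ℕ, val w J x y z.1 z.2 := by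
    rw [Summable.tsum_prod' (summable_val_prod x y) (fun i => summable_val x y i)]
    rfl
  have h2 : ∑' z : ℕ × ℕ, G w J x y (pos z.1 z.2) = ∑' n, G w J x y n := by
    apply pos_injective.tsum_eq
    intro n hn
    have : G w J x y n ≠ 0 := hn
    unfold G at this
    rw [Set.mem_range]
    by_contra hc
    apply this
    rw [if_neg]
    rintro ⟨z, hz, -⟩
    exact hc ⟨z, hz⟩
  rw [h1, ← h2]
  exact tsum_congr fun z => (G_pos_eq x y z.1 z.2).symm

/-- key uniqueness of `{0,1}`-coefficient base-4 expansions: asymmetric helper. -/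
lemma expansion_aux {f g : ℕ → ℝ} (hf : Summable f) (hg : Summable g)
    (hfg : ∑' n, f n = ∑' n, g n) (n : ℕ)
    (hagree : ∀ m < n, f m = g m) (hfn : f n = q n) (hgn : g n = 0)
    (hf0 : ∀ m, 0 ≤ f m) (hgle : ∀ m, g m ≤ q m) : False := by
  have h1 := (Summable.sum_add_tsum_nat_add (n + 1) hf).symm
  have h2 := (Summable.sum_add_tsum_nat_add (n + 1) hg).symm
  have hps : ∑ i ∈ Finset.range (n + 1), f i = ∑ i ∈ Finset.range (n + 1), g i + q n := by
    rw [Finset.sum_range_succ, Finset.sum_range_succ, hfn, hgn]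
    rw [Finset.sum_congr rfl (fun m hm => hagree m (Finset.mem_range.1 hm))]
    ring
  have htf : (0:ℝ) ≤ ∑' i, f (i + (n + 1)) :=
    tsum_nonneg (fun i => hf0 _)
  have htg : ∑' i, g (i + (n + 1)) ≤ q n / 3 := by
    have hq : ∀ i, q (i + (n + 1)) = q (n + 1) * q i := by
      intro i; rw [show i + (n + 1) = (n + 1) + i by ring, q_add]
    calc ∑' i, g (i + (n + 1)) ≤ ∑' i, q (n + 1) * q i := by
          refine Summable.tsum_le_tsum (fun i => ?_) (hg.comp_injective (add_left_injective (n + 1)))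
            (summable_q.mul_left _)
          rw [← hq]; exact hgle _
    _ = q (n + 1) * (4 / 3) := by rw [tsum_mul_left, tsum_q]
    _ ≤ q n / 3 := by
        have : q (n + 1) = q n * 4⁻¹ := by rw [q_add]; norm_num [q]
        nlinarith [q_nonneg n]
  have hqn := q_pos n
  rw [h1, h2] at hfg
  linarith

lemma expansion_unique {P Q : ℕ → Prop}
    (h : ∑' n, (if P n then q n else 0) = ∑' n, (if Q n then q n else 0)) :
    ∀ n, P n ↔ Q n := by
  set f : ℕ → ℝ := fun n => if P n then q n else 0 with hfdef
  set g : ℕ → ℝ := fun n => if Q n then q n else 0 with hgdef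
  have hf0 : ∀ m, 0 ≤ f m := fun m => by
    by_cases hp : P m <;> simp [hfdef, hp, q_nonneg m]
  have hg0 : ∀ m, 0 ≤ g m := fun m => by
    by_cases hp : Q m <;> simp [hgdef, hp, q_nonneg m]
  have hfle : ∀ m, f m ≤ q m := fun m => by
    by_cases hp : P m <;> simp [hfdef, hp, q_nonneg m]
  have hgle : ∀ m, g m ≤ q m := fun m => by
    by_cases hp : Q m <;> simp [hgdef, hp, q_nonneg m]
  have hf : Summable f := Summable.of_nonneg_of_le hf0 hfle summable_q
  have hg : Summable g := Summable.of_nonneg_of_le hg0 hgle summable_q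
  by_contra hc
  have hex : ∃ n, ¬(P n ↔ Q n) := by
    by_contra h2
    push_neg at h2
    exact hc h2
  classical
  set n := Nat.find hex with hndef
  have hn : ¬(P n ↔ Q n) := Nat.find_spec hex
  have hmin : ∀ m < n, (P m ↔ Q m) := by
    intro m hm
    rw [hndef] at hm
    exact not_not.1 (Nat.find_min hex hm)
  have hagree : ∀ m < n, f m = g m := by
    intro m hm
    simp only [hfdef, hgdef]
    rcases (hmin m hm) with ⟨h1, h2⟩
    by_cases hp : P m
    · rw [if_pos hp, if_pos (h1 hp)]
    · rw [if_neg hp, if_neg (fun hq' => hp (h2 hq'))]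
  rcases Classical.em (P n) with hp | hp
  · have hq' : ¬Q n := fun hq' => hn ⟨fun _ => hq', fun _ => hp⟩
    exact expansion_aux hf hg h n hagree (if_pos hp) (if_neg hq') hf0 hgle
  · have hq' : Q n := by
      by_contra hq'
      exact hn ⟨fun hp' => absurd hp' hp, fun hq'' => absurd hq'' hq'⟩
    exact expansion_aux hg hf h.symm n (fun m hm => (hagree m hm).symm)
      (if_pos hq') (if_neg hp) hg0 hfle

lemma bit_eq_of_ρ₀_eq {x y u v : ℕ → Ω} (h : ρ₀ w J x y = ρ₀ w J u v) :
    ∀ i m, bit w J x y i m = bit w J u v i m := by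
  intro i m
  rw [ρ₀_eq_tsum_G, ρ₀_eq_tsum_G] at h
  have := expansion_unique (P := fun n => ∃ z : ℕ × ℕ, pos z.1 z.2 = n ∧ bit w J x y z.1 z.2 = true)
    (Q := fun n => ∃ z : ℕ × ℕ, pos z.1 z.2 = n ∧ bit w J u v z.1 z.2 = true) h (pos i m)
  have hP : (∃ z : ℕ × ℕ, pos z.1 z.2 = pos i m ∧ bit w J x y z.1 z.2 = true) ↔
      bit w J x y i m = true := by
    constructor
    · rintro ⟨z, hz, hb⟩
      have : z = (i, m) := pos_injective hz
      rwa [this] at hb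
    · intro hb; exact ⟨(i, m), rfl, hb⟩
  have hQ : (∃ z : ℕ × ℕ, pos z.1 z.2 = pos i m ∧ bit w J u v z.1 z.2 = true) ↔
      bit w J u v i m = true := by
    constructor
    · rintro ⟨z, hz, hb⟩
      have : z = (i, m) := pos_injective hz
      rwa [this] at hb
    · intro hb; exact ⟨(i, m), rfl, hb⟩
  rw [hP, hQ] at this
  exact Bool.eq_iff_iff.2 this

end Rigid


section Chain

lemma trunc_mono {a b : ℕ → Ω} {i j : ℕ} (hij : i ≤ j)
    (h : trunc w j a = trunc w j b) : trunc w i a = trunc w i b := by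
  funext m
  unfold trunc
  split
  · rename_i hm
    have := congrFun h m
    simpa [trunc, lt_of_lt_of_le hm hij] using this
  · rfl

lemma eq_of_trunc {a b : ℕ → Ω} {K : ℕ} (h : ∀ i, K ≤ i → trunc w i a = trunc w i b) :
    a = b := by
  funext m
  have hi : K ≤ max (m + 1) K := le_max_right _ _
  have hm : m < max (m + 1) K := lt_of_lt_of_le (Nat.lt_succ_self m) (le_max_left _ _)
  have := congrFun (h _ hi) m
  simpa [trunc, hm] using this

lemma orient_aux {x y u v : ℕ → Ω} {nn : ℕ} (hnn : x nn ≠ y nn)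
    (hpair : ∀ i, nn + 1 ≤ i → s(trunc w i x, trunc w i y) = s(trunc w i u, trunc w i v))
    (hbase : trunc w (nn + 1) u = trunc w (nn + 1) x ∧ trunc w (nn + 1) v = trunc w (nn + 1) y) :
    ∀ i, nn + 1 ≤ i → trunc w i u = trunc w i x ∧ trunc w i v = trunc w i y := by
  refine Nat.le_induction hbase ?_
  intro i hi ih
  rcases (Sym2.mk_eq_mk_iff (p := (_, _)) (q := (_, _))).1 (hpair (i + 1) (by omega)) with hc | hc
  · rw [Prod.mk.injEq] at hc
    exact ⟨hc.1.symm, hc.2.symm⟩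
  · exfalso
    have hc' : trunc w (i + 1) x = trunc w (i + 1) v ∧ trunc w (i + 1) y = trunc w (i + 1) u := by
      rw [Prod.ext_iff] at hc
      exact ⟨hc.1, hc.2⟩
    have h1 : trunc w i u = trunc w i y := trunc_mono (Nat.le_succ i) hc'.2.symm
    have h2 : trunc w i x = trunc w i y := (ih.1.symm.trans h1)
    exact trunc_ne_of_ne hnn (by omega) h2

lemma rigid (hJ : Function.Injective J) {x y u v : ℕ → Ω}
    (h : ρ₀ w J x y = ρ₀ w J u v) (hne : ρ₀ w J x y ≠ 0) :
    ({x, y} : Set (ℕ → Ω)) = {u, v} := by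
  have hxy : x ≠ y := fun he => hne (by rw [he]; exact ρ₀_self y)
  obtain ⟨nn, hnn⟩ : ∃ n, x n ≠ y n := Function.ne_iff.1 hxy
  have hbit := bit_eq_of_ρ₀_eq h
  have hpair : ∀ i, nn + 1 ≤ i →
      s(trunc w i x, trunc w i y) = s(trunc w i u, trunc w i v) := by
    intro i hi
    have h0 : i ≠ 0 := by omega
    have hx : trunc w i x ≠ trunc w i y := trunc_ne_of_ne hnn (by omega)
    have hu : trunc w i u ≠ trunc w i v := by
      intro hcon
      have h1 := hbit i 0
      rw [bit_lead h0 hx, bit_eq_false_of_diag hcon] at h1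
      simp at h1
    apply hJ
    funext m
    have h2 := hbit i (m + 1)
    rwa [bit_tail h0 hx, bit_tail h0 hu] at h2
  have hbase := (Sym2.mk_eq_mk_iff (p := (_, _)) (q := (_, _))).1 (hpair (nn + 1) le_rfl)
  rcases hbase with hb | hb
  · rw [Prod.mk.injEq] at hb
    have hall := orient_aux hnn hpair ⟨hb.1.symm, hb.2.symm⟩
    have hux : u = x := eq_of_trunc (fun i hi => (hall i hi).1)
    have hvy : v = y := eq_of_trunc (fun i hi => (hall i hi).2)
    rw [hux, hvy]
  · have hb' : trunc w (nn + 1) x = trunc w (nn + 1) v ∧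
        trunc w (nn + 1) y = trunc w (nn + 1) u := by
      rw [Prod.ext_iff] at hb
      exact ⟨hb.1, hb.2⟩
    have hpair' : ∀ i, nn + 1 ≤ i →
        s(trunc w i y, trunc w i x) = s(trunc w i u, trunc w i v) := by
      intro i hi
      rw [Sym2.eq_swap]
      exact hpair i hi
    have hall := orient_aux (Ne.symm hnn) hpair' ⟨hb'.2.symm, hb'.1.symm⟩
    have huy : u = y := eq_of_trunc (fun i hi => (hall i hi).1)
    have hvx : v = x := eq_of_trunc (fun i hi => (hall i hi).2)
    rw [huy, hvx, Set.pair_comm]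

end Chain


lemma exists_q_lt {c ε : ℝ} (hc : 0 < c) (hε : 0 < ε) : ∃ N : ℕ, c * q N < ε := by
  obtain ⟨N, hN⟩ := exists_pow_lt_of_lt_one (div_pos hε hc) (by norm_num : (4:ℝ)⁻¹ < 1)
  refine ⟨N, ?_⟩
  have hq : q N < ε / c := hN
  calc c * q N < c * (ε / c) := by
        exact mul_lt_mul_of_pos_left hq hc
  _ = ε := by field_simp


end

end Stmt7

/-- A metric on `X` (as a distance function) that induces the topology of `X`. -/
structure MetricOn (X : Type*) [TopologicalSpace X] where
  toFun : X → X → ℝ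
  symm : ∀ x y, toFun x y = toFun y x
  refl : ∀ x, toFun x x = 0
  eq_of : ∀ x y, toFun x y = 0 → x = y
  triangle : ∀ x y z, toFun x z ≤ toFun x y + toFun y z
  isOpen_iff : ∀ s : Set X, IsOpen s ↔ ∀ x ∈ s, ∃ ε > 0, ∀ y, toFun x y < ε → y ∈ s

/-- A metric is strongly rigid if `d(x,y) = d(u,v) ≠ 0` implies `{x,y} = {u,v}`. -/
def StronglyRigid {X : Type*} [TopologicalSpace X] (d : MetricOn X) : Prop :=
  ∀ x y u v : X, d.toFun x y = d.toFun u v → d.toFun x y ≠ 0 →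
    ({x, y} : Set X) = ({u, v} : Set X)

/-- A metric is complete if every Cauchy sequence converges (with respect to it). -/
def CompleteM {X : Type*} [TopologicalSpace X] (d : MetricOn X) : Prop :=
  ∀ u : ℕ → X,
    (∀ ε > (0:ℝ), ∃ N, ∀ m ≥ N, ∀ n ≥ N, d.toFun (u m) (u n) < ε) →
    ∃ a : X, ∀ ε > (0:ℝ), ∃ N, ∀ n ≥ N, d.toFun (u n) a < ε

open Stmt7 in
/-- For a discrete space `Ω` of cardinality `𝔠` and `k ∈ ℕ`, the
countable power `Ω^ℕ` (with the product topology) carries a complete, strongly rigid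
metric inducing the product topology, of diameter at most `2^{-k}`. -/
theorem stmt7 {Ω : Type} [TopologicalSpace Ω] [DiscreteTopology Ω]
    (hΩ : Cardinal.mk Ω = Cardinal.continuum) (k : ℕ) :
    ∃ ρ : MetricOn (ℕ → Ω),
      CompleteM ρ ∧
      (∀ x y : ℕ → Ω, ρ.toFun x y ≤ (2 : ℝ) ^ (-(k : ℤ))) ∧
      StronglyRigid ρ := by
  classical
  have hΩne : Nonempty Ω :=
    Cardinal.mk_ne_zero_iff.1 (by rw [hΩ]; exact Cardinal.continuum_ne_zero)
  obtain ⟨w⟩ := hΩne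
  -- an injective coding of unordered pairs of sequences by boolean sequences
  have harrow : Cardinal.mk (ℕ → Ω) = Cardinal.continuum := by
    rw [Cardinal.mk_arrow, Cardinal.lift_id, Cardinal.lift_id, hΩ, Cardinal.mk_nat]
    exact Cardinal.continuum_power_aleph0
  have hbool : Cardinal.mk (ℕ → Bool) = Cardinal.continuum := by
    rw [Cardinal.mk_arrow, Cardinal.lift_id, Cardinal.lift_id, Cardinal.mk_bool,
      Cardinal.mk_nat]
    exact Cardinal.two_power_aleph0
  have hsurj : Function.Surjective (Function.uncurry Sym2.mk : (ℕ → Ω) × (ℕ → Ω) → Sym2 (ℕ → Ω)) := by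
    intro z
    induction z using Sym2.ind with
    | _ a b => exact ⟨(a, b), rfl⟩
  have hcard : Cardinal.mk (Sym2 (ℕ → Ω)) ≤ Cardinal.mk (ℕ → Bool) := by
    calc Cardinal.mk (Sym2 (ℕ → Ω)) ≤ Cardinal.mk ((ℕ → Ω) × (ℕ → Ω)) :=
          Cardinal.mk_le_of_surjective hsurj
    _ = Cardinal.continuum := by
        rw [Cardinal.mk_prod, Cardinal.lift_id, harrow]
        exact Cardinal.mul_eq_self Cardinal.aleph0_le_continuum
    _ = Cardinal.mk (ℕ → Bool) := hbool.symm
  obtain ⟨e⟩ := (Cardinal.le_def _ _).1 hcard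
  set J : Sym2 (ℕ → Ω) → ℕ → Bool := fun z => e z with hJdef
  have hJ : Function.Injective J := e.injective
  set c : ℝ := (2 : ℝ) ^ (-(k : ℤ)) with hcdef
  have hcpos : (0 : ℝ) < c := by positivity
  refine ⟨⟨fun x y => c * ρ₀ w J x y, ?_, ?_, ?_, ?_, ?_⟩, ?_, ?_, ?_⟩
  · -- symm
    intro x y
    show c * ρ₀ w J x y = c * ρ₀ w J y x
    rw [ρ₀_symm]
  · -- refl
    intro x
    show c * ρ₀ w J x x = 0
    rw [ρ₀_self, mul_zero]
  · -- eq_of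
    intro x y hxy0
    have h0 : ρ₀ w J x y = 0 := by
      rcases mul_eq_zero.1 hxy0 with h | h
      · exact absurd h hcpos.ne'
      · exact h
    by_contra hne
    obtain ⟨nn, hnn⟩ := Function.ne_iff.1 hne
    have h1 := ρ₀_ge (w := w) (J := J) hnn
    have h2 := q_pos (2 ^ (nn + 1))
    rw [h0] at h1
    linarith
  · -- triangle
    intro x y z
    have h := ρ₀_triangle (w := w) (J := J) x y z
    show c * ρ₀ w J x z ≤ c * ρ₀ w J x y + c * ρ₀ w J y z
    calc c * ρ₀ w J x z ≤ c * (ρ₀ w J x y + ρ₀ w J y z) :=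
          mul_le_mul_of_nonneg_left h hcpos.le
    _ = c * ρ₀ w J x y + c * ρ₀ w J y z := mul_add _ _ _
  · -- isOpen_iff
    intro s
    constructor
    · intro hs x hx
      obtain ⟨I, U, hIU, hsub⟩ := (isOpen_pi_iff.1 hs) x hx
      set N : ℕ := I.sup id + 1 with hNdef
      refine ⟨c * q (2 ^ N), mul_pos hcpos (q_pos _), ?_⟩
      intro y hy
      have hy' : c * ρ₀ w J x y < c * q (2 ^ N) := hy
      apply hsub
      refine Set.mem_pi.2 (fun a ha => ?_)
      have haI : a ∈ I := ha
      have hax : x a = y a := by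
        by_contra hne
        have h1 := ρ₀_ge (w := w) (J := J) hne
        have haN : a + 1 ≤ N := by
          have h5 := Finset.le_sup (f := id) haI
          simp only [id] at h5
          omega
        have h2 : q (2 ^ N) ≤ q (2 ^ (a + 1)) :=
          q_antitone (Nat.pow_le_pow_right (by norm_num) haN)
        have h3 : c * q (2 ^ N) ≤ c * ρ₀ w J x y :=
          mul_le_mul_of_nonneg_left (h2.trans h1) hcpos.le
        linarith [hy']
      rw [← hax]
      exact (hIU a haI).2
    · intro hcond
      rw [isOpen_pi_iff]
      intro x hx
      obtain ⟨ε, hε, hball⟩ := hcond x hx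
      obtain ⟨N, hN⟩ := exists_q_lt hcpos hε
      refine ⟨Finset.range N, fun a => {x a}, fun a _ => ⟨isOpen_discrete _, rfl⟩, ?_⟩
      intro y hy
      apply hball
      show c * ρ₀ w J x y < ε
      have hag : ∀ m < N, x m = y m := by
        intro m hm
        exact (hy m (Finset.mem_range.2 hm)).symm
      calc c * ρ₀ w J x y ≤ c * q N :=
            mul_le_mul_of_nonneg_left (ρ₀_le_of_agree hag) hcpos.le
      _ < ε := hN
  · -- CompleteM
    intro u hcauchy
    have hstab : ∀ i : ℕ, ∃ N, ∀ n ≥ N, ∀ n' ≥ N, u n i = u n' i := by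
      intro i
      obtain ⟨N, hN⟩ := hcauchy (c * q (2 ^ (i + 1))) (mul_pos hcpos (q_pos _))
      refine ⟨N, fun n hn n' hn' => ?_⟩
      by_contra hne
      have h1 := ρ₀_ge (w := w) (J := J) hne
      have h2 : c * ρ₀ w J (u n) (u n') < c * q (2 ^ (i + 1)) := hN n hn n' hn'
      have h3 := mul_le_mul_of_nonneg_left h1 hcpos.le
      linarith
    choose Nf hNf using hstab
    refine ⟨fun i => u (Nf i) i, ?_⟩
    intro ε hε
    obtain ⟨M, hM⟩ := exists_q_lt hcpos hε
    refine ⟨(Finset.range M).sup Nf, fun n hn => ?_⟩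
    show c * ρ₀ w J (u n) (fun i => u (Nf i) i) < ε
    have hag : ∀ m < M, u n m = u (Nf m) m := by
      intro m hm
      exact hNf m n (le_trans (Finset.le_sup (Finset.mem_range.2 hm)) hn) (Nf m) le_rfl
    calc c * ρ₀ w J (u n) (fun i => u (Nf i) i) ≤ c * q M := by
          refine mul_le_mul_of_nonneg_left (ρ₀_le_of_agree ?_) hcpos.le
          intro m hm
          exact hag m hm
    _ < ε := hM
  · -- diameter
    intro x y
    show c * ρ₀ w J x y ≤ c
    calc c * ρ₀ w J x y ≤ c * 1 :=
          mul_le_mul_of_nonneg_left (ρ₀_le_one x y) hcpos.le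
    _ = c := mul_one c
  · -- strongly rigid
    intro x y u' v' heq hne0
    have h1 : ρ₀ w J x y = ρ₀ w J u' v' := mul_left_cancel₀ hcpos.ne' heq
    have h2 : ρ₀ w J x y ≠ 0 := by
      intro h0
      apply hne0
      simp only [h0, mul_zero]
    exact rigid hJ h1 h2
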